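/- Let Σ ∈ ℝ^{d×d} be symmetric positive definite and D ∈ ℝ^{d×d} symmetric positive semidefinite, and let γ ∈ ℝ be such that γ I_d − D is positive definite. Then the matrix L(γ) = γ² (γ I_d − D)^{-1} Σ (γ I_d − D)^{-1} satisfies B(L(γ)) = Tr(Σ (I_d − γ (γ I_d − D)^{-1})²). -/

import Mathlib

open Matrix

-- `msqrt M` is the unique symmetric PSD square root of a symmetric PSD matrix `M` (else `0`).
open Classical in
noncomputable def msqrt {ι : Type*} [Fintype ι] [DecidableEq ι] (M : Matrix ι ι ℝ) : Matrix ι ι ℝ :=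
  if h : M.PosSemidef then
    (h.1.eigenvectorUnitary : Matrix ι ι ℝ) * diagonal ((↑) ∘ Real.sqrt ∘ h.1.eigenvalues) *
      (star (h.1.eigenvectorUnitary : Matrix ι ι ℝ))
  else 0

/-- `Bdist Sg S = Tr(S + Σ − 2(Σ^{1/2} S Σ^{1/2})^{1/2})`. -/
noncomputable def Bdist {ι : Type*} [Fintype ι] [DecidableEq ι] (Sg S : Matrix ι ι ℝ) : ℝ :=
  (S + Sg - (2:ℝ) • msqrt (msqrt Sg * S * msqrt Sg)).trace


open scoped MatrixOrder in
lemma msqrt_eq_sqrt {ι : Type*} [Fintype ι] [DecidableEq ι] {M : Matrix ι ι ℝ}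
    (h : M.PosSemidef) : msqrt M = CFC.sqrt M := by
  have h0 : 0 ≤ M := nonneg_iff_posSemidef.mpr h
  rw [msqrt, dif_pos h, CFC.sqrt_eq_cfc, cfc_nnreal_eq_real _ M, h.1.cfc_eq]
  simp only [IsHermitian.cfc]
  congr 3
  funext i
  simp [Real.coe_toNNReal _ (h.eigenvalues_nonneg i), max_eq_left (h.eigenvalues_nonneg i)]

lemma posSemidef_smul_of_nonneg {ι : Type*} [Fintype ι] {M : Matrix ι ι ℝ}
    (hM : M.PosSemidef) {c : ℝ} (hc : 0 ≤ c) : (c • M).PosSemidef := by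
  refine ⟨?_, fun x => ?_⟩
  · rw [IsHermitian, conjTranspose_smul, hM.1]
    simp
  · exact (hM.smul hc).2 x

open scoped MatrixOrder in
/-- For `γ I − D ≻ 0`, `L(γ) = γ² (γI − D)⁻¹ Σ (γI − D)⁻¹` satisfies
`B(L(γ)) = Tr(Σ (I − γ(γI − D)⁻¹)²)`. -/
theorem stmt4 {d : ℕ} [NeZero d] (Sg D : Matrix (Fin d) (Fin d) ℝ)
    (hSg : Sg.PosDef) (hD : D.PosSemidef)
    (γ : ℝ) (hγ : (γ • (1 : Matrix (Fin d) (Fin d) ℝ) - D).PosDef) :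
    Bdist Sg (γ ^ 2 • ((γ • (1 : Matrix (Fin d) (Fin d) ℝ) - D)⁻¹ * Sg *
        (γ • (1 : Matrix (Fin d) (Fin d) ℝ) - D)⁻¹)) =
      (Sg * (1 - γ • (γ • (1 : Matrix (Fin d) (Fin d) ℝ) - D)⁻¹) ^ 2).trace := by
  set A : Matrix (Fin d) (Fin d) ℝ := (γ • (1 : Matrix (Fin d) (Fin d) ℝ) - D)⁻¹ with hA
  have hApd : A.PosDef := hγ.inv
  -- γ > 0
  have hγ1 : (γ • (1 : Matrix (Fin d) (Fin d) ℝ)).PosDef := by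
    have := hγ.add_posSemidef hD
    simpa using this
  have hγpos : 0 < γ := by
    rw [smul_one_eq_diagonal] at hγ1
    have := posDef_diagonal_iff.mp hγ1
    exact this ⟨0, Nat.pos_of_ne_zero (NeZero.ne d)⟩
  have hSgPSD : Sg.PosSemidef := hSg.posSemidef
  set R : Matrix (Fin d) (Fin d) ℝ := CFC.sqrt Sg with hR
  have hRH : Rᴴ = R := (nonneg_iff_posSemidef.mp (CFC.sqrt_nonneg Sg)).1
  have hRR : R * R = Sg := CFC.sqrt_mul_sqrt_self Sg (nonneg_iff_posSemidef.mpr hSgPSD)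
  have hmsqrtSg : msqrt Sg = R := msqrt_eq_sqrt hSgPSD
  -- the inner matrix
  set L : Matrix (Fin d) (Fin d) ℝ := γ ^ 2 • (A * Sg * A) with hL
  have hRAR : (R * A * R).PosSemidef := by
    have := hApd.posSemidef.conjTranspose_mul_mul_same R
    rwa [hRH] at this
  have hM : (γ • (R * A * R)).PosSemidef := posSemidef_smul_of_nonneg hRAR (le_of_lt hγpos)
  have hsq : (γ • (R * A * R)) ^ 2 = R * L * R := by
    rw [hL, ← hRR]
    simp only [smul_pow, sq, Matrix.mul_smul, Matrix.smul_mul]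
    ring_nf
    simp only [Matrix.mul_assoc]
    rw [smul_smul, ← sq]
  have hRLR : (R * L * R).PosSemidef := hsq ▸ hM.pow 2
  have hsqrtRLR : msqrt (R * L * R) = γ • (R * A * R) := by
    rw [msqrt_eq_sqrt hRLR, CFC.sqrt_eq_iff _ _ (nonneg_iff_posSemidef.mpr hRLR)
      (nonneg_iff_posSemidef.mpr hM), ← sq]
    exact hsq
  -- expand everything as traces
  have hAH : Aᴴ = A := hApd.isHermitian
  rw [Bdist, hmsqrtSg, hsqrtRLR]
  have hexp : (1 - γ • A) ^ 2 = 1 - (2 * γ) • A + (γ ^ 2) • (A * A) := by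
    simp only [sq, sub_mul, mul_sub, one_mul, mul_one, Matrix.mul_smul, Matrix.smul_mul,
      smul_smul, two_mul, add_smul]
    abel
  rw [hexp]
  have hmul : Sg * (1 - (2 * γ) • A + (γ ^ 2) • (A * A)) =
      Sg - (2 * γ) • (Sg * A) + (γ ^ 2) • (Sg * (A * A)) := by
    simp [Matrix.mul_add, Matrix.mul_sub, Matrix.mul_smul]
  rw [hmul]
  simp only [trace_add, trace_sub, trace_smul, hL, smul_eq_mul]
  have h1 : (A * Sg * A).trace = (Sg * (A * A)).trace := by
    rw [Matrix.mul_assoc, trace_mul_comm, Matrix.mul_assoc]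
  have h2 : (R * A * R).trace = (Sg * A).trace := by
    rw [trace_mul_comm, ← Matrix.mul_assoc, hRR, trace_mul_comm]
  rw [h1, h2]
  ring
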